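/- Let C be a finite EI category such that the category algebra kC is hereditary. Then for every object x of C, the order of Aut_C(x) is invertible in k. -/

import Mathlib

open CategoryTheory
open scoped Classical

/-- Witness that `A` is the category algebra `kC` of the finite category `C`: it has a
`k`-basis indexed by the morphisms of `C`, the product of two basis elements is the basis
element of their composite when composable and `0` otherwise, and the identity element is
the sum of the identity morphisms. -/
structure CategoryAlgebraData (k : Type*) [Field k] (C : Type*) [Category C] [Fintype C]
    (A : Type*) [Ring A] [Algebra k A] where
  basis : Module.Basis (Σ x y : C, x ⟶ y) k A
  basis_mul_basis : ∀ (x₁ y₁ x₂ y₂ : C) (f : x₁ ⟶ y₁) (g : x₂ ⟶ y₂),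
    basis ⟨x₁, y₁, f⟩ * basis ⟨x₂, y₂, g⟩ =
      if h : y₂ = x₁ then basis ⟨x₂, y₁, g ≫ eqToHom h ≫ f⟩ else 0
  one_def : (1 : A) = ∑ x : C, basis ⟨x, x, 𝟙 x⟩

/-- Coefficient of a left multiplication by a basis automorphism. -/
lemma auxB {k : Type*} [Field k] {C : Type*} [Category C] [Fintype C]
    {A : Type*} [Ring A] [Algebra k A] (hA : CategoryAlgebraData k C A)
    {x : C} (g : x ⟶ x) [IsIso g] (f₀ : x ⟶ x) (a : A) :
    hA.basis.repr (hA.basis ⟨x, x, g⟩ * a) ⟨x, x, f₀⟩ =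
      hA.basis.repr a ⟨x, x, f₀ ≫ inv g⟩ := by
  have key : (hA.basis.coord ⟨x, x, f₀⟩).comp (LinearMap.mulLeft k (hA.basis ⟨x, x, g⟩))
      = hA.basis.coord ⟨x, x, f₀ ≫ inv g⟩ := by
    apply hA.basis.ext
    rintro ⟨w, y, h⟩
    simp only [LinearMap.comp_apply, LinearMap.mulLeft_apply, Module.Basis.coord_apply]
    rw [hA.basis_mul_basis]
    by_cases hy : x = y
    · subst hy
      rw [dif_pos rfl]
      simp only [eqToHom_refl, Category.id_comp, Module.Basis.repr_self]
      by_cases hw : x = w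
      · subst hw
        rw [Finsupp.single_apply, Finsupp.single_apply]
        have hiff : ((⟨x, x, h ≫ g⟩ : Σ a b : C, a ⟶ b) = ⟨x, x, f₀⟩) ↔
            ((⟨x, x, h⟩ : Σ a b : C, a ⟶ b) = ⟨x, x, f₀ ≫ inv g⟩) := by
          simp only [Sigma.mk.inj_iff, heq_eq_eq, true_and]
          constructor
          · rintro rfl; simp
          · rintro rfl; simp
        rw [if_congr hiff rfl rfl]
      · rw [Finsupp.single_apply, Finsupp.single_apply, if_neg, if_neg]
        · exact fun hEq => hw (congrArg (fun p => p.1) hEq).symm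
        · exact fun hEq => hw (congrArg (fun p => p.1) hEq).symm
    · rw [dif_neg (fun hh => hy hh.symm)]
      simp only [map_zero, Finsupp.coe_zero, Pi.zero_apply, Module.Basis.repr_self]
      rw [Finsupp.single_apply, if_neg]
      exact fun hEq => hy (congrArg (fun p => p.2.1) hEq).symm
  simpa [Module.Basis.coord_apply] using LinearMap.congr_fun key a

/-- Coefficient of a right multiplication by a basis automorphism. -/
lemma auxA {k : Type*} [Field k] {C : Type*} [Category C] [Fintype C]
    {A : Type*} [Ring A] [Algebra k A] (hA : CategoryAlgebraData k C A)
    {x : C} (f : x ⟶ x) [IsIso f] (f₀ : x ⟶ x) (a : A) :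
    hA.basis.repr (a * hA.basis ⟨x, x, f⟩) ⟨x, x, f₀⟩ =
      hA.basis.repr a ⟨x, x, inv f ≫ f₀⟩ := by
  have key : (hA.basis.coord ⟨x, x, f₀⟩).comp (LinearMap.mulRight k (hA.basis ⟨x, x, f⟩))
      = hA.basis.coord ⟨x, x, inv f ≫ f₀⟩ := by
    apply hA.basis.ext
    rintro ⟨w, y, h⟩
    simp only [LinearMap.comp_apply, LinearMap.mulRight_apply, Module.Basis.coord_apply]
    rw [hA.basis_mul_basis]
    by_cases hw : x = w
    · subst hw
      rw [dif_pos rfl]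
      simp only [eqToHom_refl, Category.id_comp, Module.Basis.repr_self]
      by_cases hy : x = y
      · subst hy
        rw [Finsupp.single_apply, Finsupp.single_apply]
        have hiff : ((⟨x, x, f ≫ h⟩ : Σ a b : C, a ⟶ b) = ⟨x, x, f₀⟩) ↔
            ((⟨x, x, h⟩ : Σ a b : C, a ⟶ b) = ⟨x, x, inv f ≫ f₀⟩) := by
          simp only [Sigma.mk.inj_iff, heq_eq_eq, true_and]
          constructor
          · rintro rfl; simp
          · rintro rfl; simp
        rw [if_congr hiff rfl rfl]
      · rw [Finsupp.single_apply, Finsupp.single_apply, if_neg, if_neg]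
        · exact fun hEq => hy (congrArg (fun p => p.2.1) hEq).symm
        · exact fun hEq => hy (congrArg (fun p => p.2.1) hEq).symm
    · rw [dif_neg hw]
      simp only [map_zero, Finsupp.coe_zero, Pi.zero_apply, Module.Basis.repr_self]
      rw [Finsupp.single_apply, if_neg]
      exact fun hEq => hw (congrArg (fun p => p.1) hEq).symm
  simpa [Module.Basis.coord_apply] using LinearMap.congr_fun key a

/-- If the category algebra `kC` of a skeletal finite EI category over an algebraically
closed field `k` is hereditary (every left ideal is projective), then for every object `x`
the order of `Aut_C(x)` is invertible in `k`. -/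
theorem stmt12 {k : Type*} [Field k] [IsAlgClosed k] {C : Type*} [Category C] [Fintype C]
    [∀ x y : C, Finite (x ⟶ y)]
    (hEI : ∀ (x : C) (f : x ⟶ x), IsIso f)
    (hskel : ∀ x y : C, (x ≅ y) → x = y)
    {A : Type*} [Ring A] [Algebra k A] (hA : CategoryAlgebraData k C A)
    (hher : ∀ I : Ideal A, Module.Projective A I) :
    ∀ x : C, (Nat.card (Aut x) : k) ≠ 0 := by
  intro x h0
  letI : ∀ a b : C, Fintype (a ⟶ b) := fun a b => Fintype.ofFinite _
  -- the order of Aut x equals the number of endomorphisms of x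
  have e1 : Nat.card (Aut x) = Fintype.card (x ⟶ x) := by
    rw [← Nat.card_eq_fintype_card]
    exact Nat.card_congr
      ⟨fun φ => φ.hom, fun f => @asIso _ _ _ _ f (hEI x f),
        fun φ => Iso.ext rfl, fun f => rfl⟩
  have hc0 : ((Fintype.card (x ⟶ x) : k)) = 0 := by rw [← e1]; exact h0
  set b : (x ⟶ x) → A := fun f => hA.basis ⟨x, x, f⟩ with hbdef
  set N : A := ∑ f : x ⟶ x, b f with hNdef
  have hbb : ∀ f g : x ⟶ x, b f * b g = b (g ≫ f) := by
    intro f g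
    rw [hbdef]
    simp [hA.basis_mul_basis]
  have hbN : ∀ g : x ⟶ x, b g * N = N := by
    intro g
    haveI := hEI x g
    rw [hNdef, Finset.mul_sum]
    simp_rw [hbb]
    exact Equiv.sum_comp
      ⟨fun f => f ≫ g, fun f => f ≫ inv g, fun f => by simp, fun f => by simp⟩ b
  -- projectivity of the left ideal A·N
  set I : Ideal A := Ideal.span {N} with hIdef
  haveI := hher I
  have hNmem : N ∈ I := Ideal.subset_span rfl
  set π : A →ₗ[A] I :=
    (LinearMap.toSpanSingleton A A N).codRestrict I
      (fun r => I.smul_mem r hNmem) with hπdef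
  have hsurj : Function.Surjective π := by
    rintro ⟨z, hz⟩
    obtain ⟨r, hr⟩ := Submodule.mem_span_singleton.mp hz
    exact ⟨r, Subtype.ext hr⟩
  obtain ⟨s, hs⟩ := Module.projective_lifting_property π LinearMap.id hsurj
  set c : A := s ⟨N, hNmem⟩ with hcdef
  have hcN : c * N = N := by
    have h1 := LinearMap.congr_fun hs ⟨N, hNmem⟩
    have h2 := congrArg Subtype.val h1
    exact h2
  have hann : ∀ r : A, r * N = 0 → r * c = 0 := by
    intro r hr
    have hz : r • (⟨N, hNmem⟩ : I) = 0 := by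
      apply Subtype.ext
      simpa [smul_eq_mul] using hr
    rw [← smul_eq_mul, hcdef, ← map_smul, hz, map_zero]
  have hgc : ∀ g : x ⟶ x, b g * c = b (𝟙 x) * c := by
    intro g
    have h1 : (b g - b (𝟙 x)) * N = 0 := by
      rw [sub_mul, hbN g, hbN (𝟙 x), sub_self]
    have h2 := hann _ h1
    rwa [sub_mul, sub_eq_zero] at h2
  have hμ : ∀ g : x ⟶ x, hA.basis.repr c ⟨x, x, g⟩ = hA.basis.repr c ⟨x, x, 𝟙 x⟩ := by
    intro g
    haveI := hEI x g
    have h1 := auxB hA g g c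
    have h2 := auxB hA (𝟙 x) g c
    rw [hgc g, h2] at h1
    simp only [IsIso.inv_id, Category.comp_id, IsIso.hom_inv_id] at h1
    exact h1
  -- coefficient of c * N at the identity
  have hfin : hA.basis.repr (c * N) ⟨x, x, 𝟙 x⟩ = 0 := by
    rw [hNdef, Finset.mul_sum, map_sum]
    rw [Finsupp.finset_sum_apply]
    have key : ∀ f : x ⟶ x, hA.basis.repr (c * b f) ⟨x, x, 𝟙 x⟩ =
        hA.basis.repr c ⟨x, x, 𝟙 x⟩ := by
      intro f
      haveI := hEI x f
      rw [hbdef]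
      rw [auxA hA f (𝟙 x) c]
      rw [Category.comp_id]
      exact hμ (inv f)
    rw [Finset.sum_congr rfl (fun f _ => key f)]
    rw [Finset.sum_const, Finset.card_univ, nsmul_eq_mul, hc0, zero_mul]
  have hN1 : hA.basis.repr N ⟨x, x, 𝟙 x⟩ = 1 := by
    rw [hNdef, map_sum, Finsupp.finset_sum_apply]
    have key : ∀ f : x ⟶ x, hA.basis.repr (b f) ⟨x, x, 𝟙 x⟩ =
        if f = 𝟙 x then 1 else 0 := by
      intro f
      rw [hbdef, Module.Basis.repr_self, Finsupp.single_apply]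
      congr 1
      simp [Sigma.mk.inj_iff]
    rw [Finset.sum_congr rfl (fun f _ => key f)]
    simp
  rw [hcN, hN1] at hfin
  exact one_ne_zero hfin
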